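/- Let F be an RQFO formula. Then for every structure M interpreting the predicates and constants of F (but not the definer predicates) and every assignment of values in M to the free variables of F: M satisfies F if and only if there exist interpretations of the definer predicates d_p for p ∈ pos(F) expanding M to a structure M′ such that M′ satisfies DEF(F) under the same assignment. Equivalently, F ≡ ∃d_{p₁} … ∃d_{pₙ} DEF(F), where p₁,…,pₙ are the positions of F and the second-order existential quantifiers are interpreted semantically via expansions of structures. -/

import Mathlib

namespace CTI

/-- Terms of first-order logic: variables and function applications.
Function symbols with empty argument lists play the role of constants. -/
inductive Tm : Type where
  | var : ℕ → Tm
  | fn  : ℕ → List Tm → Tm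

/-- The variables occurring in a term. -/
def Tm.vars : Tm → List ℕ
  | .var x => [x]
  | .fn _ ts => (ts.attach.map (fun t => Tm.vars t.1)).flatten
decreasing_by
  have h := List.sizeOf_lt_of_mem t.2; simp_wf; omega

/-- The function symbols occurring in a term. -/
def Tm.funs : Tm → List ℕ
  | .var _ => []
  | .fn f ts => f :: (ts.attach.map (fun t => Tm.funs t.1)).flatten
decreasing_by
  have h := List.sizeOf_lt_of_mem t.2; simp_wf; omega

/-- A term is ground iff it contains no variables. -/
def Tm.ground (t : Tm) : Prop := t.vars = []

/-- An interpretation (structure) over domain `D`. -/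
structure Interp (D : Type) where
  fn : ℕ → List D → D
  pr : ℕ → List D → Prop

/-- Evaluation of a term under an interpretation and a variable assignment. -/
def Tm.eval {D : Type} (I : Interp D) (a : ℕ → D) : Tm → D
  | .var x => a x
  | .fn f ts => I.fn f (ts.attach.map (fun t => Tm.eval I a t.1))
decreasing_by
  have h := List.sizeOf_lt_of_mem t.2; simp_wf; omega

/-- Formulas of first-order logic without equality. -/
inductive Fml : Type where
  | tru : Fml
  | fls : Fml
  | atom : ℕ → List Tm → Fml
  | neg : Fml → Fml
  | and : Fml → Fml → Fml
  | or : Fml → Fml → Fml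
  | all : ℕ → Fml → Fml
  | ex : ℕ → Fml → Fml

/-- Satisfaction of a formula under an interpretation and an assignment. -/
def Fml.holds {D : Type} (I : Interp D) : (ℕ → D) → Fml → Prop
  | _, .tru => True
  | _, .fls => False
  | a, .atom p ts => I.pr p (ts.map (Tm.eval I a))
  | a, .neg F => ¬ Fml.holds I a F
  | a, .and F G => Fml.holds I a F ∧ Fml.holds I a G
  | a, .or F G => Fml.holds I a F ∨ Fml.holds I a G
  | a, .all x F => ∀ d : D, Fml.holds I (Function.update a x d) F
  | a, .ex x F => ∃ d : D, Fml.holds I (Function.update a x d) F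

/-- Semantic entailment: every structure (with nonempty domain) and assignment
satisfying `F` satisfies `G`. -/
def Entails (F G : Fml) : Prop :=
  ∀ (D : Type) (_ : Nonempty D) (I : Interp D) (a : ℕ → D), F.holds I a → G.holds I a

/-- Semantic equivalence. -/
def EquivF (F G : Fml) : Prop := Entails F G ∧ Entails G F

/-- The atoms occurring in a formula, together with a polarity, relative to
the polarity `pol` of the context (`true` = positive). -/
def Fml.litsP : Bool → Fml → Set (Bool × ℕ × List Tm)
  | _, .tru => ∅
  | _, .fls => ∅
  | pol, .atom p ts => {(pol, p, ts)}
  | pol, .neg F => Fml.litsP (!pol) F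
  | pol, .and F G => Fml.litsP pol F ∪ Fml.litsP pol G
  | pol, .or F G => Fml.litsP pol F ∪ Fml.litsP pol G
  | pol, .all _ F => Fml.litsP pol F
  | pol, .ex _ F => Fml.litsP pol F

/-- lit(F): the set of pairs of an atom together with a polarity such that
the atom occurs in `F` with that polarity. -/
def Fml.lits (F : Fml) : Set (Bool × ℕ × List Tm) := Fml.litsP true F

/-- pred(F): predicates together with polarities of their occurrences. -/
def Fml.preds (F : Fml) : Set (Bool × ℕ) := {bp | ∃ ts, (bp.1, bp.2, ts) ∈ F.lits}

/-- The predicate symbols occurring in a formula (irrespective of polarity). -/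
def Fml.predSyms (F : Fml) : Set ℕ := {p | ∃ b ts, (b, p, ts) ∈ F.lits}

/-- fun(F): the function symbols (including constants) occurring in `F`. -/
def Fml.funs : Fml → Set ℕ
  | .tru => ∅
  | .fls => ∅
  | .atom _ ts => {f | ∃ t ∈ ts, f ∈ Tm.funs t}
  | .neg F => F.funs
  | .and F G => F.funs ∪ G.funs
  | .or F G => F.funs ∪ G.funs
  | .all _ F => F.funs
  | .ex _ F => F.funs

/-- The free variables of a formula. -/
def Fml.fv : Fml → Set ℕ
  | .tru => ∅
  | .fls => ∅
  | .atom _ ts => {x | ∃ t ∈ ts, x ∈ Tm.vars t}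
  | .neg F => F.fv
  | .and F G => F.fv ∪ G.fv
  | .or F G => F.fv ∪ G.fv
  | .all x F => F.fv \ {x}
  | .ex x F => F.fv \ {x}

/-- The variables occurring bound in a formula. -/
def Fml.bv : Fml → Set ℕ
  | .tru => ∅
  | .fls => ∅
  | .atom _ _ => ∅
  | .neg F => F.bv
  | .and F G => F.bv ∪ G.bv
  | .or F G => F.bv ∪ G.bv
  | .all x F => insert x F.bv
  | .ex x F => insert x F.bv

/-- All variables occurring in a formula (free or bound). -/
def Fml.varsSet : Fml → Set ℕ
  | .tru => ∅
  | .fls => ∅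
  | .atom _ ts => {x | ∃ t ∈ ts, x ∈ Tm.vars t}
  | .neg F => F.varsSet
  | .and F G => F.varsSet ∪ G.varsSet
  | .or F G => F.varsSet ∪ G.varsSet
  | .all x F => insert x F.varsSet
  | .ex x F => insert x F.varsSet

/-- Quantifier-free formulas. -/
def Fml.qfree : Fml → Prop
  | .tru => True
  | .fls => True
  | .atom _ _ => True
  | .neg F => F.qfree
  | .and F G => F.qfree ∧ G.qfree
  | .or F G => F.qfree ∧ G.qfree
  | .all _ _ => False
  | .ex _ _ => False

/-- Ground formulas: quantifier-free and without variables. -/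
def Fml.isGround : Fml → Prop
  | .tru => True
  | .fls => True
  | .atom _ ts => ∀ t ∈ ts, Tm.vars t = []
  | .neg F => F.isGround
  | .and F G => F.isGround ∧ G.isGround
  | .or F G => F.isGround ∧ G.isGround
  | .all _ _ => False
  | .ex _ _ => False

end CTI

namespace CTI

/-- A relational atom: predicate symbol with argument list. -/
abbrev Atom := ℕ × List Tm

/-- RQFO formulas: first-order formulas with relativized quantifiers.
`all vs R F` stands for ∀vs (¬R ∨ F) and `ex vs R F` for ∃vs (R ∧ F). -/
inductive RQ : Type where
  | tru : RQ
  | fls : RQ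
  | and : RQ → RQ → RQ
  | or : RQ → RQ → RQ
  | all : List ℕ → Atom → RQ → RQ
  | ex : List ℕ → Atom → RQ → RQ

/-- Well-formedness of a relativized quantification: the atom is relational
(arguments are variables or constants) and all quantified variables occur in it. -/
def atomOK (vs : List ℕ) (R : Atom) : Prop :=
  (∀ t ∈ R.2, (∃ x, t = Tm.var x) ∨ (∃ c, t = Tm.fn c [])) ∧
  ∀ v ∈ vs, Tm.var v ∈ R.2

/-- Well-formedness of RQFO formulas. -/
def RQ.wf : RQ → Prop
  | .tru => True
  | .fls => True
  | .and F G => F.wf ∧ G.wf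
  | .or F G => F.wf ∧ G.wf
  | .all vs R F => atomOK vs R ∧ F.wf
  | .ex vs R F => atomOK vs R ∧ F.wf

/-- Universal quantification upon a list of variables. -/
def allN (xs : List ℕ) (F : Fml) : Fml := xs.foldr .all F

/-- Existential quantification upon a list of variables. -/
def exN (xs : List ℕ) (F : Fml) : Fml := xs.foldr .ex F

/-- The first-order formula denoted by an RQFO formula. -/
def RQ.toFml : RQ → Fml
  | .tru => .tru
  | .fls => .fls
  | .and F G => .and F.toFml G.toFml
  | .or F G => .or F.toFml G.toFml
  | .all vs R F => allN vs (.or (.neg (.atom R.1 R.2)) F.toFml)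
  | .ex vs R F => exN vs (.and (.atom R.1 R.2) F.toFml)

/-- The free variables of an RQFO formula. -/
def RQ.fv : RQ → Finset ℕ
  | .tru => ∅
  | .fls => ∅
  | .and F G => F.fv ∪ G.fv
  | .or F G => F.fv ∪ G.fv
  | .all vs R F => ((R.2.map Tm.vars).flatten.toFinset ∪ F.fv) \ vs.toFinset
  | .ex vs R F => ((R.2.map Tm.vars).flatten.toFinset ∪ F.fv) \ vs.toFinset

/-- x̄: the free variables of an RQFO formula in the standard order. -/
def xbar (X : RQ) : List ℕ := X.fv.sort (· ≤ ·)

/-- The positions of an RQFO formula (relativizing atoms counted as part of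
their quantification). -/
def RQ.posL : RQ → List (List ℕ)
  | .tru => [[]]
  | .fls => [[]]
  | .and F G => [] :: (F.posL.map (fun q => 1 :: q) ++ G.posL.map (fun q => 2 :: q))
  | .or F G => [] :: (F.posL.map (fun q => 1 :: q) ++ G.posL.map (fun q => 2 :: q))
  | .all _ _ F => [] :: F.posL.map (fun q => 1 :: q)
  | .ex _ _ F => [] :: F.posL.map (fun q => 1 :: q)

/-- D_p: the definer atom for position `p` and subformula `X`, with the
definer predicate `d p` applied to the free variables of `X`. -/
def Dat (d : List ℕ → ℕ) (p : List ℕ) (X : RQ) : Fml :=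
  .atom (d p) ((xbar X).map .var)

/-- Implication, encoded. -/
def impF (A B : Fml) : Fml := .or (.neg A) B

/-- The conjunction of the formulas def_q for all positions `q` of the given
RQFO formula, which is located at absolute position `p`. -/
def RQ.defs (d : List ℕ → ℕ) : RQ → List ℕ → Fml
  | .tru, p => impF (Dat d p .tru) .tru
  | .fls, p => impF (Dat d p .fls) .fls
  | .and F G, p =>
      .and (allN (xbar (.and F G))
        (impF (Dat d p (.and F G)) (.and (Dat d (p ++ [1]) F) (Dat d (p ++ [2]) G))))
      (.and (RQ.defs d F (p ++ [1])) (RQ.defs d G (p ++ [2])))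
  | .or F G, p =>
      .and (allN (xbar (.or F G))
        (impF (Dat d p (.or F G)) (.or (Dat d (p ++ [1]) F) (Dat d (p ++ [2]) G))))
      (.and (RQ.defs d F (p ++ [1])) (RQ.defs d G (p ++ [2])))
  | .all vs R F, p =>
      .and (allN (xbar (.all vs R F))
        (impF (Dat d p (.all vs R F))
          (allN vs (.or (.neg (.atom R.1 R.2)) (Dat d (p ++ [1]) F)))))
      (RQ.defs d F (p ++ [1]))
  | .ex vs R F, p =>
      .and (allN (xbar (.ex vs R F))
        (impF (Dat d p (.ex vs R F))
          (exN vs (.and (.atom R.1 R.2) (Dat d (p ++ [1]) F)))))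
      (RQ.defs d F (p ++ [1]))

/-- DEF(F): the definitional (structure-preserving) form of an RQFO formula,
with definer predicates given by `d`. -/
def DEF (d : List ℕ → ℕ) (F : RQ) : Fml := .and (Dat d [] F) (RQ.defs d F [])

/-- Negation of an RQFO formula, with negation propagated inward. -/
def RQ.negR : RQ → RQ
  | .tru => .fls
  | .fls => .tru
  | .and F G => .or F.negR G.negR
  | .or F G => .and F.negR G.negR
  | .all vs R F => .ex vs R F.negR
  | .ex vs R F => .all vs R F.negR

/-- `I` and `I'` agree on all function symbols outside `Sf` and all predicate
symbols outside `Sp`. -/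
def AgreeExcept {D : Type} (Sf Sp : Set ℕ) (I I' : Interp D) : Prop :=
  (∀ f, f ∉ Sf → I.fn f = I'.fn f) ∧ (∀ p, p ∉ Sp → I.pr p = I'.pr p)

end CTI

namespace CTI
open Classical

/-- Term evaluation depends only on the function interpretation and the
values of the assignment on the variables of the term. -/
lemma Tm.eval_congr {D : Type} (I J : Interp D) (hfn : I.fn = J.fn)
    (a b : ℕ → D) (t : Tm) (h : ∀ x ∈ t.vars, a x = b x) :
    t.eval I a = t.eval J b := by
  match t with
  | .var x => simpa [Tm.eval] using h x (by simp [Tm.vars])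
  | .fn f ts =>
    simp only [Tm.eval, hfn]
    congr 1
    apply List.map_congr_left
    rintro ⟨t', ht'⟩ -
    exact Tm.eval_congr I J hfn a b t' (fun x hx => h x (by
      simp only [Tm.vars, List.mem_flatten, List.mem_map]
      exact ⟨t'.vars, ⟨⟨t', ht'⟩, List.mem_attach _ _, rfl⟩, hx⟩))
decreasing_by
  have h := List.sizeOf_lt_of_mem ht'; simp_wf; omega

lemma litsP_flip (G : Fml) : ∀ pol b s ts,
    (b, s, ts) ∈ Fml.litsP pol G → (!b, s, ts) ∈ Fml.litsP (!pol) G := by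
  induction G with
  | tru => simp [Fml.litsP]
  | fls => simp [Fml.litsP]
  | atom p ts => intro pol b s ts' h; simp [Fml.litsP] at h ⊢; tauto
  | neg F ih => intro pol b s ts h; simpa [Fml.litsP] using ih (!pol) b s ts h
  | and F G ihF ihG =>
      intro pol b s ts h; simp [Fml.litsP] at h ⊢
      rcases h with h | h
      · exact Or.inl (ihF _ _ _ _ h)
      · exact Or.inr (ihG _ _ _ _ h)
  | or F G ihF ihG =>
      intro pol b s ts h; simp [Fml.litsP] at h ⊢
      rcases h with h | h
      · exact Or.inl (ihF _ _ _ _ h)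
      · exact Or.inr (ihG _ _ _ _ h)
  | all x F ih => intro pol b s ts h; exact ih _ _ _ _ h
  | ex x F ih => intro pol b s ts h; exact ih _ _ _ _ h

/-- Any occurrence of a predicate symbol (in any polarity) witnesses
membership in `predSyms`. -/
lemma mem_predSyms_of_litsP {G : Fml} {pol : Bool} {b : Bool} {s : ℕ} {ts : List Tm}
    (h : (b, s, ts) ∈ Fml.litsP pol G) : s ∈ G.predSyms := by
  cases pol with
  | true => exact ⟨b, ts, h⟩
  | false => exact ⟨!b, ts, by simpa [Fml.lits] using litsP_flip G false b s ts h⟩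

/-- Satisfaction depends only on the function interpretation and the
interpretation of the predicate symbols occurring in the formula. -/
lemma Fml.holds_congr {D : Type} (I J : Interp D) (hfn : I.fn = J.fn)
    (G : Fml) (hpr : ∀ pol b s ts, (b, s, ts) ∈ Fml.litsP pol G → I.pr s = J.pr s) :
    ∀ a, G.holds I a ↔ G.holds J a := by
  induction G with
  | tru => intro a; simp [Fml.holds]
  | fls => intro a; simp [Fml.holds]
  | atom p ts =>
      intro a
      have hp : I.pr p = J.pr p := hpr true true p ts (by simp [Fml.litsP])
      have heq : List.map (Tm.eval I a) ts = List.map (Tm.eval J a) ts :=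
        List.map_congr_left fun t _ => Tm.eval_congr I J hfn a a t (fun _ _ => rfl)
      simp only [Fml.holds, hp, heq]
  | neg F ih =>
      intro a
      have := ih (fun pol b s ts h => hpr (!pol) b s ts (by simpa [Fml.litsP] using h))
      simp [Fml.holds, this a]
  | and F G ihF ihG =>
      intro a
      have h1 := ihF (fun pol b s ts h => hpr pol b s ts (by simp [Fml.litsP]; exact Or.inl h))
      have h2 := ihG (fun pol b s ts h => hpr pol b s ts (by simp [Fml.litsP]; exact Or.inr h))
      simp [Fml.holds, h1 a, h2 a]
  | or F G ihF ihG =>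
      intro a
      have h1 := ihF (fun pol b s ts h => hpr pol b s ts (by simp [Fml.litsP]; exact Or.inl h))
      have h2 := ihG (fun pol b s ts h => hpr pol b s ts (by simp [Fml.litsP]; exact Or.inr h))
      simp [Fml.holds, h1 a, h2 a]
  | all x F ih =>
      intro a
      have := ih (fun pol b s ts h => hpr pol b s ts h)
      simp only [Fml.holds]
      exact forall_congr' fun dd => this _
  | ex x F ih =>
      intro a
      have := ih (fun pol b s ts h => hpr pol b s ts h)
      simp only [Fml.holds]
      exact exists_congr fun dd => this _

/-- Satisfaction depends only on the values of the assignment on the free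
variables of the formula. -/
lemma Fml.holds_agree {D : Type} (I : Interp D) (G : Fml) :
    ∀ a b : ℕ → D, (∀ x ∈ G.fv, a x = b x) → (G.holds I a ↔ G.holds I b) := by
  induction G with
  | tru => intro a b h; simp [Fml.holds]
  | fls => intro a b h; simp [Fml.holds]
  | atom p ts =>
      intro a b h
      have heq : List.map (Tm.eval I a) ts = List.map (Tm.eval I b) ts :=
        List.map_congr_left fun t ht =>
          Tm.eval_congr I I rfl a b t (fun x hx => h x ⟨t, ht, hx⟩)
      simp only [Fml.holds, heq]
  | neg F ih => intro a b h; simp [Fml.holds, ih a b h]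
  | and F G ihF ihG =>
      intro a b h
      simp [Fml.holds, ihF a b (fun x hx => h x (Or.inl hx)),
        ihG a b (fun x hx => h x (Or.inr hx))]
  | or F G ihF ihG =>
      intro a b h
      simp [Fml.holds, ihF a b (fun x hx => h x (Or.inl hx)),
        ihG a b (fun x hx => h x (Or.inr hx))]
  | all x F ih =>
      intro a b h
      simp only [Fml.holds]
      refine forall_congr' fun dd => ih _ _ fun y hy => ?_
      by_cases hxy : y = x
      · subst hxy; simp [Function.update]
      · simp only [Function.update, dif_neg hxy]
        exact h y ⟨hy, hxy⟩
  | ex x F ih =>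
      intro a b h
      simp only [Fml.holds]
      refine exists_congr fun dd => ih _ _ fun y hy => ?_
      by_cases hxy : y = x
      · subst hxy; simp [Function.update]
      · simp only [Function.update, dif_neg hxy]
        exact h y ⟨hy, hxy⟩

lemma holds_allN {D : Type} (I : Interp D) (xs : List ℕ) (G : Fml) :
    ∀ a : ℕ → D, (allN xs G).holds I a ↔
      ∀ b : ℕ → D, (∀ y, y ∉ xs → b y = a y) → G.holds I b := by
  induction xs with
  | nil =>
      intro a
      simp only [allN, List.foldr_nil]
      constructor
      · intro h b hb
        have : b = a := funext fun y => hb y (by simp)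
        rwa [this]
      · intro h; exact h a (fun _ _ => rfl)
  | cons x xs ih =>
      intro a
      show (Fml.all x (allN xs G)).holds I a ↔ _
      simp only [Fml.holds]
      constructor
      · intro h b hb
        refine (ih (Function.update a x (b x))).mp (h (b x)) b fun y hy => ?_
        by_cases hxy : y = x
        · subst hxy; simp [Function.update]
        · simp only [Function.update, dif_neg hxy]
          exact hb y (by simp [hy, hxy])
      · intro h dd
        refine (ih _).mpr fun b hb => h b fun y hy => ?_
        have hyx : y ≠ x := fun e => hy (by simp [e])
        have := hb y (fun hyxs => hy (by simp [hyxs]))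
        rwa [Function.update, dif_neg hyx] at this

lemma holds_exN {D : Type} (I : Interp D) (xs : List ℕ) (G : Fml) :
    ∀ a : ℕ → D, (exN xs G).holds I a ↔
      ∃ b : ℕ → D, (∀ y, y ∉ xs → b y = a y) ∧ G.holds I b := by
  induction xs with
  | nil =>
      intro a
      simp only [exN, List.foldr_nil]
      constructor
      · intro h; exact ⟨a, fun _ _ => rfl, h⟩
      · rintro ⟨b, hb, h⟩
        have : b = a := funext fun y => hb y (by simp)
        rwa [this] at h
  | cons x xs ih =>
      intro a
      show (Fml.ex x (exN xs G)).holds I a ↔ _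
      simp only [Fml.holds]
      constructor
      · rintro ⟨dd, h⟩
        obtain ⟨b, hb, hG⟩ := (ih _).mp h
        refine ⟨b, fun y hy => ?_, hG⟩
        have hyx : y ≠ x := fun e => hy (by simp [e])
        have := hb y (fun hyxs => hy (by simp [hyxs]))
        rwa [Function.update, dif_neg hyx] at this
      · rintro ⟨b, hb, hG⟩
        refine ⟨b x, (ih _).mpr ⟨b, fun y hy => ?_, hG⟩⟩
        by_cases hxy : y = x
        · subst hxy; simp [Function.update]
        · simp only [Function.update, dif_neg hxy]
          exact hb y (by simp [hy, hxy])

lemma fv_allN (xs : List ℕ) (G : Fml) :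
    Fml.fv (allN xs G) = Fml.fv G \ {y | y ∈ xs} := by
  induction xs with
  | nil => simp [allN]
  | cons x xs ih =>
      show Fml.fv (.all x (allN xs G)) = _
      simp only [Fml.fv, ih]
      ext y; simp; tauto

lemma fv_exN (xs : List ℕ) (G : Fml) :
    Fml.fv (exN xs G) = Fml.fv G \ {y | y ∈ xs} := by
  induction xs with
  | nil => simp [exN]
  | cons x xs ih =>
      show Fml.fv (.ex x (exN xs G)) = _
      simp only [Fml.fv, ih]
      ext y; simp; tauto

lemma mem_xbar {X : RQ} {x : ℕ} : x ∈ xbar X ↔ x ∈ X.fv := Finset.mem_sort _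

/-- The free variables of the FO translation are among the RQ free variables. -/
lemma fv_toFml (X : RQ) : Fml.fv X.toFml ⊆ {x | x ∈ X.fv} := by
  induction X with
  | tru => simp [RQ.toFml, Fml.fv]
  | fls => simp [RQ.toFml, Fml.fv]
  | and F G ihF ihG =>
      intro x hx
      rcases hx with hx | hx
      · simpa [RQ.fv] using Or.inl (ihF hx)
      · simpa [RQ.fv] using Or.inr (ihG hx)
  | or F G ihF ihG =>
      intro x hx
      rcases hx with hx | hx
      · simpa [RQ.fv] using Or.inl (ihF hx)
      · simpa [RQ.fv] using Or.inr (ihG hx)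
  | all vs R F ih =>
      intro x hx
      rw [RQ.toFml, fv_allN] at hx
      obtain ⟨hx1, hx2⟩ := hx
      simp only [Set.mem_setOf_eq, RQ.fv, Finset.mem_sdiff, Finset.mem_union,
        List.mem_toFinset, List.mem_flatten]
      refine ⟨?_, by simpa using hx2⟩
      rcases hx1 with hx1 | hx1
      · rcases hx1 with ⟨t, ht, hxt⟩
        exact Or.inl ⟨t.vars, by simpa using ⟨t, ht, rfl⟩, hxt⟩
      · exact Or.inr (ih hx1)
  | ex vs R F ih =>
      intro x hx
      rw [RQ.toFml, fv_exN] at hx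
      obtain ⟨hx1, hx2⟩ := hx
      simp only [Set.mem_setOf_eq, RQ.fv, Finset.mem_sdiff, Finset.mem_union,
        List.mem_toFinset, List.mem_flatten]
      refine ⟨?_, by simpa using hx2⟩
      rcases hx1 with hx1 | hx1
      · rcases hx1 with ⟨t, ht, hxt⟩
        exact Or.inl ⟨t.vars, by simpa using ⟨t, ht, rfl⟩, hxt⟩
      · exact Or.inr (ih hx1)

lemma holds_Dat {D : Type} (I : Interp D) (d : List ℕ → ℕ) (p : List ℕ) (X : RQ)
    (c : ℕ → D) : (Dat d p X).holds I c ↔ I.pr (d p) ((xbar X).map c) := by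
  have hc : (Tm.eval I c ∘ Tm.var) = c := funext fun x => by simp [Tm.eval]
  simp [Dat, Fml.holds, List.map_map, hc]

lemma litsP_allN (xs : List ℕ) (G : Fml) (pol : Bool) :
    Fml.litsP pol (allN xs G) = Fml.litsP pol G := by
  induction xs with
  | nil => rfl
  | cons x xs ih => show Fml.litsP pol (.all x (allN xs G)) = _; rw [Fml.litsP, ih]

lemma litsP_exN (xs : List ℕ) (G : Fml) (pol : Bool) :
    Fml.litsP pol (exN xs G) = Fml.litsP pol G := by
  induction xs with
  | nil => rfl
  | cons x xs ih => show Fml.litsP pol (.ex x (exN xs G)) = _; rw [Fml.litsP, ih]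

/-- The subformula of an RQFO formula at a position, if any. -/
def RQ.sub : RQ → List ℕ → Option RQ
  | X, [] => some X
  | .and F _, 1 :: p => F.sub p
  | .and _ G, 2 :: p => G.sub p
  | .or F _, 1 :: p => F.sub p
  | .or _ G, 2 :: p => G.sub p
  | .all _ _ F, 1 :: p => F.sub p
  | .ex _ _ F, 1 :: p => F.sub p
  | _, _ => none

lemma sub_mem_posL : ∀ (F : RQ) (p : List ℕ) (X : RQ), F.sub p = some X → p ∈ F.posL := by
  intro F
  induction F with
  | tru =>
      rintro (_ | ⟨i, p⟩) X h
      · simp [RQ.posL]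
      · simp [RQ.sub] at h
  | fls =>
      rintro (_ | ⟨i, p⟩) X h
      · simp [RQ.posL]
      · simp [RQ.sub] at h
  | and F G ihF ihG =>
      rintro (_ | ⟨(_ | _ | _ | i), p⟩) X h
      · simp [RQ.posL]
      · simp [RQ.sub] at h
      · exact List.mem_cons_of_mem _ (List.mem_append_left _
          (List.mem_map_of_mem (ihF p X h)))
      · exact List.mem_cons_of_mem _ (List.mem_append_right _
          (List.mem_map_of_mem (ihG p X h)))
      · simp [RQ.sub] at h
  | or F G ihF ihG =>
      rintro (_ | ⟨(_ | _ | _ | i), p⟩) X h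
      · simp [RQ.posL]
      · simp [RQ.sub] at h
      · exact List.mem_cons_of_mem _ (List.mem_append_left _
          (List.mem_map_of_mem (ihF p X h)))
      · exact List.mem_cons_of_mem _ (List.mem_append_right _
          (List.mem_map_of_mem (ihG p X h)))
      · simp [RQ.sub] at h
  | all vs R F ih =>
      rintro (_ | ⟨(_ | _ | i), p⟩) X h
      · simp [RQ.posL]
      · simp [RQ.sub] at h
      · exact List.mem_cons_of_mem _ (List.mem_map_of_mem (ih p X h))
      · simp [RQ.sub] at h
  | ex vs R F ih =>
      rintro (_ | ⟨(_ | _ | i), p⟩) X h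
      · simp [RQ.posL]
      · simp [RQ.sub] at h
      · exact List.mem_cons_of_mem _ (List.mem_map_of_mem (ih p X h))
      · simp [RQ.sub] at h

lemma sub_sub : ∀ (p : List ℕ) (F X Y : RQ) (q : List ℕ),
    F.sub p = some X → X.sub q = some Y → F.sub (p ++ q) = some Y := by
  intro p
  induction p with
  | nil => intro F X Y q h1 h2; simp [RQ.sub] at h1; subst h1; simpa using h2
  | cons i p ih =>
      intro F X Y q h1 h2
      match F, i with
      | .and F G, 1 => exact ih F X Y q h1 h2
      | .and F G, 2 => exact ih G X Y q h1 h2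
      | .or F G, 1 => exact ih F X Y q h1 h2
      | .or F G, 2 => exact ih G X Y q h1 h2
      | .all vs R F, 1 => exact ih F X Y q h1 h2
      | .ex vs R F, 1 => exact ih F X Y q h1 h2
      | .tru, _ => simp [RQ.sub] at h1
      | .fls, _ => simp [RQ.sub] at h1
      | .all _ _ _, _ + 2 => simp [RQ.sub] at h1
      | .ex _ _ _, _ + 2 => simp [RQ.sub] at h1

lemma lits_sub_step : ∀ (F X : RQ) (i : ℕ) (p : List ℕ),
    F.sub (i :: p) = some X → ∃ G : RQ, G.sub p = some X ∧
      Fml.litsP true G.toFml ⊆ Fml.litsP true F.toFml := by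
  intro F X i p h
  match F, i with
  | .and F G, 1 => exact ⟨F, h, by simp [RQ.toFml, Fml.litsP]⟩
  | .and F G, 2 => exact ⟨G, h, by simp [RQ.toFml, Fml.litsP]⟩
  | .or F G, 1 => exact ⟨F, h, by simp [RQ.toFml, Fml.litsP]⟩
  | .or F G, 2 => exact ⟨G, h, by simp [RQ.toFml, Fml.litsP]⟩
  | .all vs R F, 1 =>
      exact ⟨F, h, by
        simp only [RQ.toFml, litsP_allN, Fml.litsP]
        exact Set.subset_union_right⟩
  | .ex vs R F, 1 =>
      exact ⟨F, h, by
        simp only [RQ.toFml, litsP_exN, Fml.litsP]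
        exact Set.subset_union_right⟩
  | .tru, _ => simp [RQ.sub] at h
  | .fls, _ => simp [RQ.sub] at h
  | .all _ _ _, _ + 2 => simp [RQ.sub] at h
  | .ex _ _ _, _ + 2 => simp [RQ.sub] at h

lemma lits_sub : ∀ (p : List ℕ) (F X : RQ), F.sub p = some X →
    Fml.litsP true X.toFml ⊆ Fml.litsP true F.toFml := by
  intro p
  induction p with
  | nil => intro F X h; simp [RQ.sub] at h; subst h; rfl
  | cons i p ih =>
      intro F X h
      obtain ⟨G, hG, hsub⟩ := lits_sub_step F X i p h
      exact (ih G X hG).trans hsub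

/-- The relativizing atom of a quantified subformula contributes its predicate
symbol to the predicate symbols of the whole formula. -/
lemma R_mem_predSyms_all {F : RQ} {p : List ℕ} {vs : List ℕ} {R : Atom} {X : RQ}
    (h : F.sub p = some (.all vs R X)) : R.1 ∈ (RQ.toFml F).predSyms := by
  have hx : (false, R.1, R.2) ∈ Fml.litsP true (RQ.toFml (.all vs R X)) := by
    simp [RQ.toFml, litsP_allN, Fml.litsP]
  exact mem_predSyms_of_litsP (lits_sub p F _ h hx)

lemma R_mem_predSyms_ex {F : RQ} {p : List ℕ} {vs : List ℕ} {R : Atom} {X : RQ}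
    (h : F.sub p = some (.ex vs R X)) : R.1 ∈ (RQ.toFml F).predSyms := by
  have hx : (true, R.1, R.2) ∈ Fml.litsP true (RQ.toFml (.ex vs R X)) := by
    simp [RQ.toFml, litsP_exN, Fml.litsP]
  exact mem_predSyms_of_litsP (lits_sub p F _ h hx)

/-- The canonical expansion of `I` interpreting each definer predicate by the
semantics of the corresponding subformula. -/
noncomputable def defInterp (F : RQ) (d : List ℕ → ℕ) {D : Type} (I : Interp D) :
    Interp D where
  fn := I.fn
  pr := fun q args =>
    if h : ∃ p ∈ F.posL, q = d p then
      ∃ b : ℕ → D, (xbar ((F.sub h.choose).getD .tru)).map b = args ∧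
        (((F.sub h.choose).getD .tru).toFml).holds I b
    else I.pr q args

lemma defInterp_pr_eq {F : RQ} {d : List ℕ → ℕ}
    (hinj : ∀ p ∈ F.posL, ∀ q ∈ F.posL, d p = d q → p = q)
    {D : Type} (I : Interp D) {p : List ℕ} {X : RQ} (hX : F.sub p = some X)
    (args : List D) :
    (defInterp F d I).pr (d p) args ↔
      ∃ b : ℕ → D, (xbar X).map b = args ∧ X.toFml.holds I b := by
  have hp : p ∈ F.posL := sub_mem_posL F p X hX
  have hcond : ∃ p' ∈ F.posL, d p = d p' := ⟨p, hp, rfl⟩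
  have hc := hcond.choose_spec
  have hcp : hcond.choose = p := hinj hcond.choose hc.1 p hp hc.2.symm
  show (if h : ∃ p' ∈ F.posL, d p = d p' then _ else _) ↔ _
  rw [dif_pos hcond, hcp, hX]
  rfl

lemma defInterp_pr_out {F : RQ} {d : List ℕ → ℕ} {D : Type} (I : Interp D)
    {q : ℕ} (hq : ¬ ∃ p ∈ F.posL, q = d p) :
    (defInterp F d I).pr q = I.pr q := by
  funext args
  show (if h : ∃ p ∈ F.posL, q = d p then _ else _) = _
  rw [dif_neg hq]

lemma map_eq_pointwise {D : Type} : ∀ (l : List ℕ) (b c : ℕ → D),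
    l.map b = l.map c → ∀ x ∈ l, b x = c x := by
  intro l b c
  induction l with
  | nil => intro h x hx; simp at hx
  | cons y l ih =>
      intro h x hx
      simp only [List.map_cons, List.cons.injEq] at h
      rcases List.mem_cons.mp hx with hx | hx
      · exact hx ▸ h.1
      · exact ih h.2 x hx

lemma holds_Dat_defInterp {F : RQ} {d : List ℕ → ℕ}
    (hinj : ∀ p ∈ F.posL, ∀ q ∈ F.posL, d p = d q → p = q)
    {D : Type} (I : Interp D) {p : List ℕ} {X : RQ} (hX : F.sub p = some X)
    (c : ℕ → D) :
    (Dat d p X).holds (defInterp F d I) c ↔ X.toFml.holds I c := by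
  rw [holds_Dat, defInterp_pr_eq hinj I hX]
  constructor
  · rintro ⟨b, hb, h⟩
    exact (Fml.holds_agree I X.toFml b c fun x hx =>
      map_eq_pointwise _ b c hb x (mem_xbar.mpr (fv_toFml X hx))).mp h
  · intro h; exact ⟨c, rfl, h⟩

lemma fresh_atom_pr {F : RQ} {d : List ℕ → ℕ}
    (hfresh : ∀ p ∈ F.posL, d p ∉ (RQ.toFml F).predSyms)
    {D : Type} (I : Interp D) {s : ℕ} (hs : s ∈ (RQ.toFml F).predSyms) :
    (defInterp F d I).pr s = I.pr s := by
  refine defInterp_pr_out I ?_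
  rintro ⟨p', hp', rfl⟩
  exact hfresh p' hp' hs

lemma atom_holds_defInterp {F : RQ} {d : List ℕ → ℕ}
    (hfresh : ∀ p ∈ F.posL, d p ∉ (RQ.toFml F).predSyms)
    {D : Type} (I : Interp D) {s : ℕ} (hs : s ∈ (RQ.toFml F).predSyms)
    (ts : List Tm) (c : ℕ → D) :
    (Fml.atom s ts).holds (defInterp F d I) c ↔ (Fml.atom s ts).holds I c := by
  have hR := fresh_atom_pr hfresh I hs
  have heq : List.map (Tm.eval (defInterp F d I) c) ts = List.map (Tm.eval I c) ts :=
    List.map_congr_left fun t _ => Tm.eval_congr (defInterp F d I) I rfl c c t (fun _ _ => rfl)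
  simp only [Fml.holds, hR, heq]

/-- Forward direction: the canonical expansion satisfies all the definitions. -/
lemma fwd_defs {F : RQ} {d : List ℕ → ℕ}
    (hinj : ∀ p ∈ F.posL, ∀ q ∈ F.posL, d p = d q → p = q)
    (hfresh : ∀ p ∈ F.posL, d p ∉ (RQ.toFml F).predSyms)
    {D : Type} (I : Interp D) :
    ∀ (X : RQ) (p : List ℕ), F.sub p = some X →
      ∀ a : ℕ → D, (RQ.defs d X p).holds (defInterp F d I) a := by
  intro X
  induction X with
  | tru => intro p hsub a; simp [RQ.defs, impF, Fml.holds]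
  | fls =>
      intro p hsub a
      simp only [RQ.defs, impF, Fml.holds]
      refine Or.inl fun h => ?_
      have hD : (Dat d p RQ.fls).holds (defInterp F d I) a := h
      rw [holds_Dat_defInterp hinj I hsub] at hD
      simp [RQ.toFml, Fml.holds] at hD
  | and F₁ F₂ ih1 ih2 =>
      intro p hsub a
      have h1 : F.sub (p ++ [1]) = some F₁ := sub_sub p F _ F₁ [1] hsub (by simp [RQ.sub])
      have h2 : F.sub (p ++ [2]) = some F₂ := sub_sub p F _ F₂ [2] hsub (by simp [RQ.sub])
      simp only [RQ.defs, Fml.holds]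
      refine ⟨?_, ih1 _ h1 a, ih2 _ h2 a⟩
      rw [holds_allN]
      intro b _
      simp only [impF, Fml.holds]
      by_cases hD : (Dat d p (RQ.and F₁ F₂)).holds (defInterp F d I) b
      · rw [holds_Dat_defInterp hinj I hsub] at hD
        simp only [RQ.toFml, Fml.holds] at hD
        exact Or.inr ⟨(holds_Dat_defInterp hinj I h1 b).mpr hD.1,
          (holds_Dat_defInterp hinj I h2 b).mpr hD.2⟩
      · exact Or.inl hD
  | or F₁ F₂ ih1 ih2 =>
      intro p hsub a
      have h1 : F.sub (p ++ [1]) = some F₁ := sub_sub p F _ F₁ [1] hsub (by simp [RQ.sub])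
      have h2 : F.sub (p ++ [2]) = some F₂ := sub_sub p F _ F₂ [2] hsub (by simp [RQ.sub])
      simp only [RQ.defs, Fml.holds]
      refine ⟨?_, ih1 _ h1 a, ih2 _ h2 a⟩
      rw [holds_allN]
      intro b _
      simp only [impF, Fml.holds]
      by_cases hD : (Dat d p (RQ.or F₁ F₂)).holds (defInterp F d I) b
      · rw [holds_Dat_defInterp hinj I hsub] at hD
        simp only [RQ.toFml, Fml.holds] at hD
        rcases hD with hD | hD
        · exact Or.inr (Or.inl ((holds_Dat_defInterp hinj I h1 b).mpr hD))
        · exact Or.inr (Or.inr ((holds_Dat_defInterp hinj I h2 b).mpr hD))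
      · exact Or.inl hD
  | all vs R F₁ ih =>
      intro p hsub a
      have h1 : F.sub (p ++ [1]) = some F₁ := sub_sub p F _ F₁ [1] hsub (by simp [RQ.sub])
      simp only [RQ.defs, Fml.holds]
      refine ⟨?_, ih _ h1 a⟩
      rw [holds_allN]
      intro b _
      simp only [impF, Fml.holds]
      by_cases hD : (Dat d p (RQ.all vs R F₁)).holds (defInterp F d I) b
      · refine Or.inr ?_
        rw [holds_Dat_defInterp hinj I hsub] at hD
        simp only [RQ.toFml] at hD
        rw [holds_allN] at hD ⊢
        intro c hc
        have := hD c hc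
        simp only [Fml.holds] at this ⊢
        rcases this with hneg | hF1
        · refine Or.inl fun hat => hneg ?_
          exact (atom_holds_defInterp hfresh I (R_mem_predSyms_all hsub) R.2 c).mp hat
        · exact Or.inr ((holds_Dat_defInterp hinj I h1 c).mpr hF1)
      · exact Or.inl hD
  | ex vs R F₁ ih =>
      intro p hsub a
      have h1 : F.sub (p ++ [1]) = some F₁ := sub_sub p F _ F₁ [1] hsub (by simp [RQ.sub])
      simp only [RQ.defs, Fml.holds]
      refine ⟨?_, ih _ h1 a⟩
      rw [holds_allN]
      intro b _
      simp only [impF, Fml.holds]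
      by_cases hD : (Dat d p (RQ.ex vs R F₁)).holds (defInterp F d I) b
      · refine Or.inr ?_
        rw [holds_Dat_defInterp hinj I hsub] at hD
        simp only [RQ.toFml] at hD
        rw [holds_exN] at hD ⊢
        obtain ⟨c, hc, hcH⟩ := hD
        simp only [Fml.holds] at hcH
        refine ⟨c, hc, ?_, (holds_Dat_defInterp hinj I h1 c).mpr hcH.2⟩
        exact (atom_holds_defInterp hfresh I (R_mem_predSyms_ex hsub) R.2 c).mpr hcH.1
      · exact Or.inl hD

/-- Backward direction: in any model of the definitions, the definer atom
implies the defined (sub)formula. -/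
lemma bwd_defs {D : Type} (J : Interp D) (d : List ℕ → ℕ) :
    ∀ (X : RQ) (p : List ℕ) (a : ℕ → D), (RQ.defs d X p).holds J a →
      ∀ b : ℕ → D, (Dat d p X).holds J b → X.toFml.holds J b := by
  intro X
  induction X with
  | tru => intro p a _ b _; simp [RQ.toFml, Fml.holds]
  | fls =>
      intro p a hdefs b hb
      simp only [RQ.defs, impF, Fml.holds] at hdefs
      rcases hdefs with hdefs | hdefs
      · exfalso
        apply hdefs
        have hx : xbar RQ.fls = [] := by simp [xbar, RQ.fv]
        rw [holds_Dat] at hb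
        have : (Dat d p RQ.fls).holds J a := by rw [holds_Dat]; simpa [hx] using hb
        exact this
      · exact hdefs.elim
  | and F₁ F₂ ih1 ih2 =>
      intro p a hdefs b hb
      obtain ⟨hAll, hd1, hd2⟩ : _ ∧ _ ∧ _ := hdefs
      set X := RQ.and F₁ F₂ with hXdef
      set b' : ℕ → D := fun y => if y ∈ xbar X then b y else a y with hb'def
      have hagree : ∀ x ∈ Fml.fv X.toFml, b' x = b x := fun x hx => by
        simp only [hb'def, if_pos (mem_xbar.mpr (fv_toFml X hx))]
      have hDb' : (Dat d p X).holds J b' := by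
        rw [holds_Dat] at hb ⊢
        have : (xbar X).map b' = (xbar X).map b :=
          List.map_congr_left fun x hx => by simp only [hb'def, if_pos hx]
        rw [this]; exact hb
      rw [holds_allN] at hAll
      have hImp := hAll b' (fun y hy => by simp only [hb'def, if_neg hy])
      simp only [impF, Fml.holds] at hImp
      rcases hImp with hImp | ⟨hD1, hD2⟩
      · exact absurd hDb' hImp
      refine (Fml.holds_agree J X.toFml b' b hagree).mp ?_
      exact ⟨ih1 (p ++ [1]) a hd1 b' hD1, ih2 (p ++ [2]) a hd2 b' hD2⟩
  | or F₁ F₂ ih1 ih2 =>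
      intro p a hdefs b hb
      obtain ⟨hAll, hd1, hd2⟩ : _ ∧ _ ∧ _ := hdefs
      set X := RQ.or F₁ F₂ with hXdef
      set b' : ℕ → D := fun y => if y ∈ xbar X then b y else a y with hb'def
      have hagree : ∀ x ∈ Fml.fv X.toFml, b' x = b x := fun x hx => by
        simp only [hb'def, if_pos (mem_xbar.mpr (fv_toFml X hx))]
      have hDb' : (Dat d p X).holds J b' := by
        rw [holds_Dat] at hb ⊢
        have : (xbar X).map b' = (xbar X).map b :=
          List.map_congr_left fun x hx => by simp only [hb'def, if_pos hx]
        rw [this]; exact hb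
      rw [holds_allN] at hAll
      have hImp := hAll b' (fun y hy => by simp only [hb'def, if_neg hy])
      simp only [impF, Fml.holds] at hImp
      rcases hImp with hImp | (hD1 | hD2)
      · exact absurd hDb' hImp
      · exact (Fml.holds_agree J X.toFml b' b hagree).mp
          (Or.inl (ih1 (p ++ [1]) a hd1 b' hD1))
      · exact (Fml.holds_agree J X.toFml b' b hagree).mp
          (Or.inr (ih2 (p ++ [2]) a hd2 b' hD2))
  | all vs R F₁ ih =>
      intro p a hdefs b hb
      obtain ⟨hAll, hd1⟩ : _ ∧ _ := hdefs
      set X := RQ.all vs R F₁ with hXdef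
      set b' : ℕ → D := fun y => if y ∈ xbar X then b y else a y with hb'def
      have hagree : ∀ x ∈ Fml.fv X.toFml, b' x = b x := fun x hx => by
        simp only [hb'def, if_pos (mem_xbar.mpr (fv_toFml X hx))]
      have hDb' : (Dat d p X).holds J b' := by
        rw [holds_Dat] at hb ⊢
        have : (xbar X).map b' = (xbar X).map b :=
          List.map_congr_left fun x hx => by simp only [hb'def, if_pos hx]
        rw [this]; exact hb
      rw [holds_allN] at hAll
      have hImp := hAll b' (fun y hy => by simp only [hb'def, if_neg hy])
      simp only [impF, Fml.holds] at hImp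
      rcases hImp with hImp | hQ
      · exact absurd hDb' hImp
      refine (Fml.holds_agree J X.toFml b' b hagree).mp ?_
      show (allN vs (.or (.neg (.atom R.1 R.2)) F₁.toFml)).holds J b'
      rw [holds_allN] at hQ ⊢
      intro c hc
      have := hQ c hc
      simp only [Fml.holds] at this ⊢
      rcases this with hneg | hD1c
      · exact Or.inl hneg
      · exact Or.inr (ih (p ++ [1]) a hd1 c hD1c)
  | ex vs R F₁ ih =>
      intro p a hdefs b hb
      obtain ⟨hAll, hd1⟩ : _ ∧ _ := hdefs
      set X := RQ.ex vs R F₁ with hXdef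
      set b' : ℕ → D := fun y => if y ∈ xbar X then b y else a y with hb'def
      have hagree : ∀ x ∈ Fml.fv X.toFml, b' x = b x := fun x hx => by
        simp only [hb'def, if_pos (mem_xbar.mpr (fv_toFml X hx))]
      have hDb' : (Dat d p X).holds J b' := by
        rw [holds_Dat] at hb ⊢
        have : (xbar X).map b' = (xbar X).map b :=
          List.map_congr_left fun x hx => by simp only [hb'def, if_pos hx]
        rw [this]; exact hb
      rw [holds_allN] at hAll
      have hImp := hAll b' (fun y hy => by simp only [hb'def, if_neg hy])
      simp only [impF, Fml.holds] at hImp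
      rcases hImp with hImp | hQ
      · exact absurd hDb' hImp
      refine (Fml.holds_agree J X.toFml b' b hagree).mp ?_
      show (exN vs (.and (.atom R.1 R.2) F₁.toFml)).holds J b'
      rw [holds_exN] at hQ ⊢
      obtain ⟨c, hc, hcH⟩ := hQ
      simp only [Fml.holds] at hcH
      exact ⟨c, hc, hcH.1, ih (p ++ [1]) a hd1 c hcH.2⟩

/-- Semantic property of the definitional form of an RQFO
formula: F ≡ ∃d_{p₁} … ∃d_{pₙ} DEF(F). -/
theorem def_form_equivalence (F : RQ) (hwf : F.wf) (d : List ℕ → ℕ)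
    (hinj : ∀ p ∈ F.posL, ∀ q ∈ F.posL, d p = d q → p = q)
    (hfresh : ∀ p ∈ F.posL, d p ∉ (RQ.toFml F).predSyms)
    (D : Type) (hD : Nonempty D) (I : Interp D) (a : ℕ → D) :
    (RQ.toFml F).holds I a ↔
      ∃ I' : Interp D,
        AgreeExcept ∅ {q | ∃ p ∈ F.posL, q = d p} I I' ∧ (DEF d F).holds I' a := by
  constructor
  · intro h
    refine ⟨defInterp F d I, ⟨fun f _ => rfl, fun q hq => (defInterp_pr_out I hq).symm⟩, ?_, ?_⟩
    · exact (holds_Dat_defInterp hinj I (show F.sub [] = some F by cases F <;> rfl) a).mpr h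
    · exact fwd_defs hinj hfresh I F [] (by cases F <;> rfl) a
  · rintro ⟨I', ⟨hfn, hpr⟩, hDatH, hdefs⟩
    have hF' : (RQ.toFml F).holds I' a := bwd_defs I' d F [] a hdefs a hDatH
    refine (Fml.holds_congr I I' (funext fun f => hfn f (Set.notMem_empty f))
      (RQ.toFml F) (fun pol b s ts hmem => ?_) a).mpr hF'
    refine hpr s ?_
    rintro ⟨p, hp, rfl⟩
    exact hfresh p hp (mem_predSyms_of_litsP hmem)

end CTI
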